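/- Let 1 ≤ k ≤ n-1 and let t be a nonnegative integer. Then the sum over j from 0 to t of C(n-k-1+j, j) * C(k-1+j, j) equals C(t+n-k, n-k) times the sum over j from 0 to k-1 of ((n-k)/(n-k+j)) * C(t, j) * C(k-1, j), where the latter sum is taken in the rationals. -/

import Mathlib

open Finset

lemma vand_aux (b t : ℕ) :
    ∑ j ∈ Finset.range (b + 1), (t + 1).choose j * b.choose j = (t + 1 + b).choose b := by
  rw [Nat.add_choose_eq, Finset.Nat.sum_antidiagonal_eq_sum_range_succ_mk]
  refine Finset.sum_congr rfl fun j hj => ?_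
  rw [Finset.mem_range] at hj
  rw [Nat.choose_symm (by omega)]

lemma term_aux (a t j : ℕ) :
    (a + j).choose j * (t + (a + 1)).choose (a + j) =
      (t + (a + 1)).choose a * (t + 1).choose j := by
  by_cases hj : j ≤ t + 1
  · have h1 := Nat.choose_mul (n := t + (a + 1)) (k := a + j) (s := a) (by omega)
    have h2 : t + (a + 1) - a = t + 1 := by omega
    have h3 : a + j - a = j := by omega
    rw [h2, h3] at h1
    rw [← h1, Nat.choose_symm_add, Nat.mul_comm]
  · rw [Nat.choose_eq_zero_of_lt (show t + (a + 1) < a + j by omega),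
      Nat.choose_eq_zero_of_lt (show t + 1 < j by omega)]
    simp

lemma keyJ_aux (a b t : ℕ) :
    ∑ j ∈ Finset.range (b + 1),
        (a + j).choose j * (b.choose j * (t + (a + 1)).choose (a + j)) =
      (t + (a + 1)).choose a * (t + 1 + b).choose b := by
  rw [← vand_aux b t, Finset.mul_sum]
  refine Finset.sum_congr rfl fun j _ => ?_
  calc (a + j).choose j * (b.choose j * (t + (a + 1)).choose (a + j))
      = b.choose j * ((a + j).choose j * (t + (a + 1)).choose (a + j)) := by ring
    _ = b.choose j * ((t + (a + 1)).choose a * (t + 1).choose j) := by rw [term_aux]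
    _ = (t + (a + 1)).choose a * ((t + 1).choose j * b.choose j) := by ring

lemma main_aux (a b t : ℕ) :
    ∑ j ∈ Finset.range (t + 1), (a + j).choose j * (b + j).choose j =
      ∑ j ∈ Finset.range (b + 1),
        (a + j).choose j * (b.choose j * (t + (a + 1)).choose (a + 1 + j)) := by
  induction t with
  | zero =>
    rw [Finset.sum_range_one]
    rw [Finset.sum_eq_single 0]
    · simp
    · intro j _ hj
      rw [Nat.choose_eq_zero_of_lt (show 0 + (a + 1) < a + 1 + j by omega)]
      simp
    · intro h
      simp at h
  | succ t ih =>
    rw [Finset.sum_range_succ, ih]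
    have hsplit : ∀ j : ℕ, (t + 1 + (a + 1)).choose (a + 1 + j) =
        (t + (a + 1)).choose (a + 1 + j) + (t + (a + 1)).choose (a + j) := by
      intro j
      have h1 : t + 1 + (a + 1) = (t + (a + 1)) + 1 := by omega
      have h2 : a + 1 + j = (a + j) + 1 := by omega
      rw [h1, h2, Nat.choose_succ_succ']
      omega
    have : ∑ j ∈ Finset.range (b + 1),
        (a + j).choose j * (b.choose j * (t + 1 + (a + 1)).choose (a + 1 + j)) =
        (∑ j ∈ Finset.range (b + 1),
          (a + j).choose j * (b.choose j * (t + (a + 1)).choose (a + 1 + j))) +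
        ∑ j ∈ Finset.range (b + 1),
          (a + j).choose j * (b.choose j * (t + (a + 1)).choose (a + j)) := by
      rw [← Finset.sum_add_distrib]
      refine Finset.sum_congr rfl fun j _ => ?_
      rw [hsplit j]
      ring
    rw [this, keyJ_aux]
    congr 1
    have e0 : t + (a + 1) = a + (t + 1) := by omega
    have e0' : t + 1 + b = b + (t + 1) := by omega
    rw [e0, e0',
      Nat.choose_symm_of_eq_add (show a + (t + 1) = (t + 1) + a by omega),
      Nat.choose_symm_of_eq_add (show b + (t + 1) = (t + 1) + b by omega)]

lemma perterm_aux (a t j : ℕ) :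
    (a + 1) * ((t + (a + 1)).choose (a + 1) * t.choose j) =
      (a + 1 + j) * ((a + j).choose j * (t + (a + 1)).choose (a + 1 + j)) := by
  have ha : (a + 1 + j) * (a + j).choose j = (a + 1) * (a + 1 + j).choose j := by
    have h := Nat.add_one_mul_choose_eq (a + j) a
    have h1 : a + j + 1 = a + 1 + j := by omega
    have h2 : a.succ = a + 1 := rfl
    rw [h1] at h
    rw [← Nat.choose_symm_add, h, Nat.choose_symm_add, mul_comm]
  by_cases hj : j ≤ t
  · have h1 := Nat.choose_mul (n := t + (a + 1)) (k := a + 1 + j) (s := a + 1) (by omega)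
    have h2 : t + (a + 1) - (a + 1) = t := by omega
    have h3 : a + 1 + j - (a + 1) = j := by omega
    rw [h2, h3] at h1
    calc (a + 1) * ((t + (a + 1)).choose (a + 1) * t.choose j)
        = (a + 1) * ((t + (a + 1)).choose (a + 1 + j) * (a + 1 + j).choose (a + 1)) := by
          rw [h1]
      _ = (a + 1) * ((a + 1 + j).choose j * (t + (a + 1)).choose (a + 1 + j)) := by
          rw [Nat.choose_symm_add]; ring
      _ = ((a + 1) * (a + 1 + j).choose j) * (t + (a + 1)).choose (a + 1 + j) := by ring
      _ = ((a + 1 + j) * (a + j).choose j) * (t + (a + 1)).choose (a + 1 + j) := by rw [ha]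
      _ = (a + 1 + j) * ((a + j).choose j * (t + (a + 1)).choose (a + 1 + j)) := by ring
  · rw [Nat.choose_eq_zero_of_lt (show t < j by omega),
      Nat.choose_eq_zero_of_lt (show t + (a + 1) < a + 1 + j by omega)]
    simp

theorem ehrhart_minimal_matroid_factorization (n k t : ℕ) (hk : 1 ≤ k) (hkn : k ≤ n - 1) :
    (∑ j ∈ Finset.range (t + 1),
        ((n - k - 1 + j).choose j * (k - 1 + j).choose j : ℚ)) =
      ((t + n - k).choose (n - k) : ℚ) *
        ∑ j ∈ Finset.range k,
          ((n - k : ℕ) : ℚ) / ((n - k + j : ℕ) : ℚ) *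
            (t.choose j : ℚ) * ((k - 1).choose j : ℚ) := by
  have hn : k + 1 ≤ n := by omega
  obtain ⟨a, ha⟩ : ∃ a, n - k = a + 1 := ⟨n - k - 1, by omega⟩
  obtain ⟨b, hb⟩ : ∃ b, k = b + 1 := ⟨k - 1, by omega⟩
  have h1 : n - k - 1 = a := by omega
  have h2 : k - 1 = b := by omega
  have h3 : t + n - k = t + (a + 1) := by omega
  rw [h1, h2, ha, h3, hb]
  have key := main_aux a b t
  have lhs_cast : (∑ j ∈ Finset.range (t + 1),
      ((a + j).choose j * (b + j).choose j : ℚ)) =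
      ((∑ j ∈ Finset.range (t + 1), (a + j).choose j * (b + j).choose j : ℕ) : ℚ) := by
    push_cast; rfl
  rw [lhs_cast, key]
  push_cast
  rw [Finset.mul_sum]
  refine Finset.sum_congr rfl fun j _ => ?_
  have hne : ((a : ℚ) + 1 + j) ≠ 0 := by positivity
  have hnat := perterm_aux a t j
  have hq : ((a : ℚ) + 1) * ((t + (a + 1)).choose (a + 1) * t.choose j) =
      ((a : ℚ) + 1 + j) * ((a + j).choose j * (t + (a + 1)).choose (a + 1 + j)) := by
    exact_mod_cast congrArg (Nat.cast (R := ℚ)) hnat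
  field_simp
  push_cast at hq ⊢
  nlinarith [hq]
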